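/- For any λ > 1 there exists a countable, locally finite family 𝒞 of closed discs in the plane with pairwise disjoint interiors such that the family of λ-enlargements {λ(C − c_C) + c_C : C ∈ 𝒞} covers all of ℝ². (Discs of unbounded radii are allowed.) -/

import Mathlib

open Metric

/-- For any `λ > 1` there is a countable, locally finite packing of the plane by closed
discs (given as center–radius pairs with positive radii, with pairwise disjoint open
discs) whose `λ`-enlargements cover the whole plane. -/
theorem stmt_10 (lam : ℝ) (hlam : 1 < lam) :
    ∃ 𝒞 : Set (EuclideanSpace ℝ (Fin 2) × ℝ),
      𝒞.Countable ∧
      (∀ C ∈ 𝒞, 0 < C.2) ∧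
      (∀ C ∈ 𝒞, ∀ D ∈ 𝒞, C ≠ D → Disjoint (ball C.1 C.2) (ball D.1 D.2)) ∧
      (∀ K : Set (EuclideanSpace ℝ (Fin 2)), Bornology.IsBounded K →
        {C ∈ 𝒞 | (closedBall C.1 C.2 ∩ K).Nonempty}.Finite) ∧
      (∀ x : EuclideanSpace ℝ (Fin 2), ∃ C ∈ 𝒞, x ∈ closedBall C.1 (lam * C.2)) := by
  have h0 : (0:ℝ) < lam - 1 := by linarith
  set k : ℝ := 2 * (lam - 1) / 3 with hk
  have hk0 : 0 < k := by positivity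
  set ρ : ℝ := 1 + 3 / (lam - 1) with hρ
  have hρ1 : 1 < ρ := by
    have : 0 < 3 / (lam - 1) := by positivity
    simp only [hρ]; linarith
  have hρ0 : (0:ℝ) < ρ := by linarith
  have hkρ : k * (ρ - 1) = 2 := by
    rw [hk, hρ, add_sub_cancel_left]
    field_simp
  have hpow1 : ∀ i : ℕ, (1:ℝ) ≤ ρ ^ i := fun i => one_le_pow₀ hρ1.le
  set e1 : EuclideanSpace ℝ (Fin 2) := EuclideanSpace.single 0 1 with he1
  have he1n : ‖e1‖ = 1 := by simp [he1]
  set a : ℕ → ℝ := fun i => (1 + k) * ρ ^ i - k with ha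
  have ha0 : ∀ i, 0 ≤ a i := by
    intro i
    have := hpow1 i
    simp only [ha]
    nlinarith
  set c : ℕ → EuclideanSpace ℝ (Fin 2) × ℝ := fun i => (a i • e1, ρ ^ i) with hc
  have hcinj : Function.Injective c := by
    intro i j hij
    have h2 : ρ ^ i = ρ ^ j := congrArg Prod.snd hij
    exact pow_right_injective₀ hρ0 hρ1.ne' h2
  have hdist : ∀ i j : ℕ, dist (a i • e1) (a j • e1) = |a i - a j| := by
    intro i j
    rw [dist_eq_norm, ← sub_smul, norm_smul, he1n, mul_one, Real.norm_eq_abs]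
  -- key separation lemma
  have hsep : ∀ i j : ℕ, i < j → ρ ^ i + ρ ^ j ≤ a j - a i := by
    intro i j hij
    have h1 : ρ ^ (i + 1) ≤ ρ ^ j := pow_le_pow_right₀ hρ1.le hij
    have h2 : ρ ^ (i + 1) = ρ ^ i * ρ := pow_succ ρ i
    have h3 := hpow1 i
    simp only [ha]
    nlinarith
  refine ⟨Set.range c, Set.countable_range c, ?_, ?_, ?_, ?_⟩
  · rintro C ⟨i, rfl⟩
    exact pow_pos hρ0 i
  · rintro C ⟨i, rfl⟩ D ⟨j, rfl⟩ hne
    have hij : i ≠ j := fun h => hne (by rw [h])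
    apply ball_disjoint_ball
    rcases hij.lt_or_gt with h | h
    · have h1 := hsep i j h
      have h2 := pow_pos hρ0 i
      have h3 := pow_pos hρ0 j
      rw [hc]
      simp only [hdist]
      rw [abs_sub_comm, abs_of_nonneg (by linarith)]
      linarith
    · have h1 := hsep j i h
      have h2 := pow_pos hρ0 i
      have h3 := pow_pos hρ0 j
      rw [hc]
      simp only [hdist]
      rw [abs_of_nonneg (by linarith)]
      linarith
  · intro K hK
    obtain ⟨R, hR⟩ := hK.subset_closedBall 0
    obtain ⟨N, hN⟩ := pow_unbounded_of_one_lt (R / k + 1) hρ1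
    apply Set.Finite.subset ((Set.finite_Iio N).image c)
    rintro C ⟨⟨i, rfl⟩, y, hy1, hy2⟩
    refine ⟨i, ?_, rfl⟩
    have hy3 : ‖y‖ ≤ R := by simpa using hR hy2
    have hy4 : dist (a i • e1) y ≤ ρ ^ i := by
      have : dist y (a i • e1) ≤ ρ ^ i := by simpa [hc, mem_closedBall] using hy1
      rwa [dist_comm] at this
    have h5 : a i ≤ ρ ^ i + R := by
      have : ‖a i • e1‖ ≤ dist (a i • e1) y + ‖y‖ := by
        have := dist_triangle (a i • e1) y 0
        simpa [dist_eq_norm] using this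
      rw [norm_smul, he1n, mul_one, Real.norm_eq_abs, abs_of_nonneg (ha0 i)] at this
      linarith
    have h6 : ρ ^ i ≤ R / k + 1 := by
      have h7 : k * (ρ ^ i - 1) ≤ R := by simp only [ha] at h5; nlinarith
      rw [div_add' _ _ _ hk0.ne', le_div_iff₀ hk0]
      nlinarith
    have : ρ ^ i < ρ ^ N := lt_of_le_of_lt h6 hN
    exact Set.mem_Iio.mpr ((pow_lt_pow_iff_right₀ hρ1).mp this)
  · intro x
    obtain ⟨i, hi⟩ := pow_unbounded_of_one_lt (‖x‖ * (3 / (lam - 1))) hρ1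
    refine ⟨c i, ⟨i, rfl⟩, ?_⟩
    have hx : ‖x‖ ≤ (lam - 1) / 3 * ρ ^ i := by
      have hpos : (0:ℝ) < (lam - 1) / 3 := by positivity
      have h := mul_le_mul_of_nonneg_right hi.le hpos.le
      have h3 : ‖x‖ * (3 / (lam - 1)) * ((lam - 1) / 3) = ‖x‖ := by field_simp
      rw [h3] at h
      linarith [mul_comm (ρ ^ i) ((lam - 1) / 3)]
    have hd : dist x (a i • e1) ≤ ‖x‖ + a i := by
      have := dist_le_norm_add_norm x (a i • e1)
      rw [norm_smul, he1n, mul_one, Real.norm_eq_abs, abs_of_nonneg (ha0 i)] at this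
      exact this
    simp only [hc, mem_closedBall]
    have hlast : ‖x‖ + a i ≤ lam * ρ ^ i := by
      have hsum : (lam - 1) / 3 + k = lam - 1 := by rw [hk]; ring
      have hmul : ((lam - 1) / 3) * ρ ^ i + k * ρ ^ i = (lam - 1) * ρ ^ i := by
        rw [← add_mul, hsum]
      have hk1 : k ≤ k * ρ ^ i := le_mul_of_one_le_right hk0.le (hpow1 i)
      simp only [ha]
      linarith
    exact hd.trans hlast
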